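/- (Lemma 3.1, reduced form.) Let c ∈ (0,√2), p ∈ (0,1) with p > p₀, and let k ∈ ℕ, k ≥ 1, be such that κ₂/κ₁ < k. Then the set { θ ∈ ℝ : θ < θ₂, θ ≠ θ₁, and L(c,p,θ) = m for some positive integer m } is finite and has at most 2·(⌈k/2⌉ − 1) elements. (Each such θ corresponds to an even one-troughed travelling wave solution of the beam problem u_ττ + u_xxxx + au⁺ − bu⁻ = 1; hence there are at most 2·(⌈k/2⌉ − 1) such waves.) -/

import Mathlib

open Real Filter Set Topology
set_option linter.unusedSectionVars false
set_option maxHeartbeats 1600000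

/-- `ξ = p c⁴ / 4`. -/
noncomputable def xiPar (c p : ℝ) : ℝ := p * c ^ 4 / 4

/-- `κ₁ = √((c² − √(c⁴ − 4ξ))/2)`. -/
noncomputable def kappa1 (c p : ℝ) : ℝ :=
  Real.sqrt ((c ^ 2 - Real.sqrt (c ^ 4 - 4 * xiPar c p)) / 2)

/-- `κ₂ = √((c² + √(c⁴ − 4ξ))/2)`. -/
noncomputable def kappa2 (c p : ℝ) : ℝ :=
  Real.sqrt ((c ^ 2 + Real.sqrt (c ^ 4 - 4 * xiPar c p)) / 2)

/-- The function `L(c,p,θ)` from the paper. -/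
noncomputable def Lfun (c p θ : ℝ) : ℝ :=
  (1 / 2) * (1 + kappa2 c p / kappa1 c p)
  + (1 / Real.pi) * Real.arctan
      ((kappa2 c p * (-(kappa1 c p) ^ 2 + xiPar c p + xiPar c p * θ * Real.sqrt (2 - c ^ 2))) /
       (xiPar c p * (θ * (kappa1 c p) ^ 2 + Real.sqrt (2 - c ^ 2) + θ * (1 - c ^ 2))))
  - (kappa2 c p / (kappa1 c p * Real.pi)) * Real.arctan
      ((kappa1 c p * (-(kappa2 c p) ^ 2 + xiPar c p + xiPar c p * θ * Real.sqrt (2 - c ^ 2))) /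
       (xiPar c p * (θ * (kappa2 c p) ^ 2 + Real.sqrt (2 - c ^ 2) + θ * (1 - c ^ 2))))

/-- The discontinuity point `θ₁ = −2√(2−c²)/(2−c² − c²√(1−p))`. -/
noncomputable def theta1 (c p : ℝ) : ℝ :=
  -2 * Real.sqrt (2 - c ^ 2) / (2 - c ^ 2 - c ^ 2 * Real.sqrt (1 - p))

/-- The discontinuity point `θ₂ = −2√(2−c²)/(2−c² + c²√(1−p))`. -/
noncomputable def theta2 (c p : ℝ) : ℝ :=
  -2 * Real.sqrt (2 - c ^ 2) / (2 - c ^ 2 + c ^ 2 * Real.sqrt (1 - p))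

/-- The threshold `p₀ = 4(c²−1)/c⁴`. -/
noncomputable def p0 (c : ℝ) : ℝ := 4 * (c ^ 2 - 1) / c ^ 4

noncomputable def Gfun (κ₁ κ₂ s ξ θ : ℝ) : ℝ :=
  (1/2)*(1 + κ₂/κ₁)
  + (1/Real.pi) * Real.arctan ((κ₂*(ξ - κ₁^2) + κ₂*(ξ*s)*θ) / (ξ*s + ξ*(1-κ₂^2)*θ))
  - (κ₂/(κ₁*Real.pi)) * Real.arctan ((κ₁*(ξ - κ₂^2) + κ₁*(ξ*s)*θ) / (ξ*s + ξ*(1-κ₁^2)*θ))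


lemma aux_hasDerivAt_atan_ratio (a b e d x : ℝ) (hd : e + d * x ≠ 0) :
    HasDerivAt (fun y => Real.arctan ((a + b * y) / (e + d * y)))
      ((b * (e + d * x) - (a + b * x) * d) / ((e + d * x) ^ 2 + (a + b * x) ^ 2)) x := by
  have h1 : HasDerivAt (fun y : ℝ => a + b * y) b x := by
    have h := ((hasDerivAt_id' x).const_mul b).const_add a; rw [mul_one] at h; exact h
  have h2 : HasDerivAt (fun y : ℝ => e + d * y) d x := by
    have h := ((hasDerivAt_id' x).const_mul d).const_add e; rw [mul_one] at h; exact h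
  have h3 := (h1.div h2 hd).arctan
  convert h3 using 1
  · rfl
  simp only [Pi.div_apply]
  have hd2 : (0:ℝ) < (e + d * x) ^ 2 := by positivity
  have hQ : (e + d * x) ^ 2 + (a + b * x) ^ 2 ≠ 0 := by nlinarith [sq_nonneg (a + b * x)]
  have h1p : 1 + ((a + b * x) / (e + d * x)) ^ 2 ≠ 0 := by positivity
  field_simp


lemma aux_G_deriv (κ₁ κ₂ s ξ t₁ t₂ : ℝ) (hk1 : 0 < κ₁) (hk12 : κ₁ < κ₂) (hv1 : κ₂^2 < 1)
    (hξ : ξ = κ₁^2 * κ₂^2) (hs : 0 < s) (hs2 : s^2 = 2 - (κ₁^2 + κ₂^2))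
    (ht1 : t₁ = -s/(1-κ₂^2)) (ht2 : t₂ = -s/(1-κ₁^2)) {x : ℝ}
    (hxne : x ≠ t₁) (hxlt : x < t₂) :
    ∃ d : ℝ, HasDerivAt (Gfun κ₁ κ₂ s ξ) d x ∧ d < 0 := by
  have hk2 : 0 < κ₂ := hk1.trans hk12
  have hu1 : κ₁^2 < 1 := by nlinarith
  have hupos : 0 < κ₁^2 := by positivity
  have hvpos : 0 < κ₂^2 := by positivity
  have huv : κ₁^2 < κ₂^2 := by nlinarith
  have hξpos : 0 < ξ := by rw [hξ]; positivity
  have hξ1 : ξ < 1 := by rw [hξ]; nlinarith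
  have h1v : 0 < 1 - κ₂^2 := by linarith
  have h1u : 0 < 1 - κ₁^2 := by linarith
  have ht2neg : t₂ < 0 := by rw [ht2]; rw [neg_div]; simp; positivity
  have hxneg : x < 0 := hxlt.trans ht2neg
  -- denominators
  have hfact1 : ξ*s + ξ*(1-κ₂^2)*x = (ξ*(1-κ₂^2))*(x - t₁) := by
    rw [ht1]; field_simp; ring
  have hfact2 : ξ*s + ξ*(1-κ₁^2)*x = (ξ*(1-κ₁^2))*(x - t₂) := by
    rw [ht2]; field_simp; ring
  have hden1 : ξ*s + ξ*(1-κ₂^2)*x ≠ 0 := by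
    rw [hfact1]
    exact mul_ne_zero (by positivity) (sub_ne_zero.mpr hxne)
  have hden2neg : ξ*s + ξ*(1-κ₁^2)*x < 0 := by
    rw [hfact2]
    exact mul_neg_of_pos_of_neg (by positivity) (by linarith)
  have hden2 : ξ*s + ξ*(1-κ₁^2)*x ≠ 0 := ne_of_lt hden2neg
  have h1 := aux_hasDerivAt_atan_ratio (κ₂*(ξ - κ₁^2)) (κ₂*(ξ*s)) (ξ*s) (ξ*(1-κ₂^2)) x hden1
  have h2 := aux_hasDerivAt_atan_ratio (κ₁*(ξ - κ₂^2)) (κ₁*(ξ*s)) (ξ*s) (ξ*(1-κ₁^2)) x hden2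
  have hC : HasDerivAt (fun _ : ℝ => (1/2)*(1 + κ₂/κ₁)) 0 x := hasDerivAt_const x _
  have hG := (hC.add (h1.const_mul (1/Real.pi))).sub (h2.const_mul (κ₂/(κ₁*Real.pi)))
  refine ⟨_, hG, ?_⟩
  set Q₁ := (ξ*s + ξ*(1-κ₂^2)*x)^2 + (κ₂*(ξ - κ₁^2) + κ₂*(ξ*s)*x)^2 with hQ₁def
  set Q₂ := (ξ*s + ξ*(1-κ₁^2)*x)^2 + (κ₁*(ξ - κ₂^2) + κ₁*(ξ*s)*x)^2 with hQ₂def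
  have hQ₁pos : 0 < Q₁ := by
    rw [hQ₁def]
    have h := pow_ne_zero 2 hden1
    have h2 := sq_nonneg (ξ*s + ξ*(1-κ₂^2)*x)
    have h3 := sq_nonneg (κ₂*(ξ - κ₁^2) + κ₂*(ξ*s)*x)
    rcases lt_of_le_of_ne h2 (Ne.symm h) with h4
    linarith
  have hQ₂pos : 0 < Q₂ := by
    rw [hQ₂def]
    have h := pow_ne_zero 2 hden2
    have h2 := sq_nonneg (ξ*s + ξ*(1-κ₁^2)*x)
    have h3 := sq_nonneg (κ₁*(ξ - κ₂^2) + κ₁*(ξ*s)*x)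
    rcases lt_of_le_of_ne h2 (Ne.symm h) with h4
    linarith
  have hW1 : κ₂*(ξ*s) * (ξ*s + ξ*(1-κ₂^2)*x) - (κ₂*(ξ - κ₁^2) + κ₂*(ξ*s)*x) * (ξ*(1-κ₂^2))
      = κ₂*(ξ*(κ₁^2*(1-ξ))) := by
    subst hξ
    linear_combination (κ₂*(κ₁^2*κ₂^2)^2) * hs2
  have hW2 : κ₁*(ξ*s) * (ξ*s + ξ*(1-κ₁^2)*x) - (κ₁*(ξ - κ₂^2) + κ₁*(ξ*s)*x) * (ξ*(1-κ₁^2))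
      = κ₁*(ξ*(κ₂^2*(1-ξ))) := by
    subst hξ
    linear_combination (κ₁*(κ₁^2*κ₂^2)^2) * hs2
  have key : κ₁^2 * Q₂ - κ₂^2 * Q₁ = -(ξ^2 * (κ₂^2-κ₁^2) * (1-ξ) * x^2) := by
    rw [hQ₁def, hQ₂def]
    subst hξ
    linear_combination (-((κ₁^2*κ₂^2)^2*(κ₂^2-κ₁^2)*(1+(κ₁^2+κ₂^2)*x^2))) * hs2
  have hkey : κ₁^2 * Q₂ < κ₂^2 * Q₁ := by
    have hx0 : x ≠ 0 := ne_of_lt hxneg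
    have hx2 : 0 < x^2 := lt_of_le_of_ne (sq_nonneg x) (Ne.symm (pow_ne_zero 2 hx0))
    have hpos : 0 < ξ^2 * (κ₂^2-κ₁^2) * (1-ξ) * x^2 :=
      mul_pos (mul_pos (mul_pos (pow_pos hξpos 2) (by linarith)) (by linarith)) hx2
    linarith [key]
  rw [hW1, hW2]
  have hπ : (0:ℝ) < Real.pi := Real.pi_pos
  have e1 : (1/Real.pi) * (κ₂*(ξ*(κ₁^2*(1-ξ))) / Q₁) = (κ₂*ξ*(1-ξ)) * κ₁^2 / (Real.pi * Q₁) := by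
    field_simp
  have e2 : (κ₂/(κ₁*Real.pi)) * (κ₁*(ξ*(κ₂^2*(1-ξ))) / Q₂) = (κ₂*ξ*(1-ξ)) * κ₂^2 / (Real.pi * Q₂) := by
    have : κ₁ ≠ 0 := ne_of_gt hk1
    field_simp
  rw [e1, e2]
  rw [zero_add, sub_neg]
  rw [div_lt_div_iff₀ (by positivity) (by positivity)]
  have hcpos : 0 < κ₂*ξ*(1-ξ) := mul_pos (mul_pos hk2 hξpos) (by linarith)
  nlinarith [mul_lt_mul_of_pos_left hkey hcpos, mul_pos hcpos hπ,
    mul_lt_mul_of_pos_left (mul_lt_mul_of_pos_left hkey hcpos) hπ]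

lemma aux_lb_left {f : ℝ → ℝ} {b l : ℝ} (hm : StrictAntiOn f (Set.Iio b))
    (hl : Tendsto f (𝓝[<] b) (𝓝 l)) {x : ℝ} (hx : x < b) : l < f x := by
  set y := (x + b) / 2 with hy
  have hxy : x < y := by rw [hy]; linarith
  have hyb : y < b := by rw [hy]; linarith
  have h1 : l ≤ f y := by
    refine le_of_tendsto hl ?_
    filter_upwards [Ioo_mem_nhdsLT_of_mem (show b ∈ Set.Ioc y b from ⟨hyb, le_refl b⟩)] with z hz
    exact (hm hyb hz.2 hz.1).le
  exact lt_of_le_of_lt h1 (hm (show x ∈ Set.Iio b from hx) (show y ∈ Set.Iio b from hyb) hxy)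


lemma aux_ub_right {f : ℝ → ℝ} {a b l : ℝ} (hm : StrictAntiOn f (Set.Ioo a b))
    (hl : Tendsto f (𝓝[>] a) (𝓝 l)) {x : ℝ} (hx : x ∈ Set.Ioo a b) : f x < l := by
  set y := (a + x) / 2 with hy
  have hay : a < y := by rw [hy]; linarith [hx.1]
  have hyx : y < x := by rw [hy]; linarith [hx.1]
  have hyB : y ∈ Set.Ioo a b := ⟨hay, hyx.trans hx.2⟩
  have h1 : f y ≤ l := by
    refine ge_of_tendsto hl ?_
    filter_upwards [Ioo_mem_nhdsGT_of_mem (show a ∈ Set.Ico a y from ⟨le_refl a, hay⟩)] with z hz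
    exact (hm ⟨hz.1, hz.2.trans hyB.2⟩ hyB hz.2).le
  exact lt_of_lt_of_le (hm hyB hx hyx) h1


lemma aux_count {f : ℝ → ℝ} {T : Set ℝ} (hinj : Set.InjOn f T) (lo hi : ℕ)
    (hb : ∀ x ∈ T, ∃ m : ℕ, f x = m ∧ lo ≤ m ∧ m ≤ hi) :
    T.Finite ∧ T.ncard ≤ hi + 1 - lo := by
  have himg : f '' T ⊆ (fun m : ℕ => (m : ℝ)) '' (Set.Icc lo hi) := by
    rintro y ⟨x, hx, rfl⟩
    obtain ⟨m, hm, h1, h2⟩ := hb x hx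
    exact ⟨m, ⟨h1, h2⟩, hm.symm⟩
  have hfin' : ((fun m : ℕ => (m : ℝ)) '' (Set.Icc lo hi)).Finite :=
    (Set.finite_Icc lo hi).image _
  have hfinimg : (f '' T).Finite := hfin'.subset himg
  have hTfin : T.Finite := Set.Finite.of_finite_image hfinimg hinj
  refine ⟨hTfin, ?_⟩
  calc T.ncard = (f '' T).ncard := (Set.ncard_image_of_injOn hinj).symm
    _ ≤ ((fun m : ℕ => (m : ℝ)) '' (Set.Icc lo hi)).ncard := Set.ncard_le_ncard himg hfin'
    _ ≤ (Set.Icc lo hi).ncard := Set.ncard_image_le (Set.finite_Icc lo hi)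
    _ = hi + 1 - lo := by rw [← Finset.coe_Icc, Set.ncard_coe_finset, Nat.card_Icc]

section main
variable {κ₁ κ₂ s ξ t₁ t₂ : ℝ} (hk1 : 0 < κ₁) (hk12 : κ₁ < κ₂) (hv1 : κ₂^2 < 1)
    (hξ : ξ = κ₁^2 * κ₂^2) (hs : 0 < s) (hs2 : s^2 = 2 - (κ₁^2 + κ₂^2))
    (ht1 : t₁ = -s/(1-κ₂^2)) (ht2 : t₂ = -s/(1-κ₁^2))

include hk1 hk12 hv1 hξ hs hs2 ht1 ht2

lemma aux_t12 : t₁ < t₂ ∧ t₂ < 0 := by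
  have h1u : 0 < 1 - κ₁^2 := by nlinarith
  have h1v : 0 < 1 - κ₂^2 := by linarith
  constructor
  · rw [ht1, ht2, neg_div, neg_div, neg_lt_neg_iff]
    exact div_lt_div_of_pos_left hs h1v (by nlinarith)
  · rw [ht2, neg_div, neg_lt, neg_zero]
    positivity

lemma aux_G_anti₁ : StrictAntiOn (Gfun κ₁ κ₂ s ξ) (Set.Iio t₁) := by
  obtain ⟨h12, h2n⟩ := aux_t12 hk1 hk12 hv1 hξ hs hs2 ht1 ht2
  apply strictAntiOn_of_deriv_neg (convex_Iio t₁)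
  · intro x hx
    obtain ⟨d, hd, _⟩ := aux_G_deriv κ₁ κ₂ s ξ t₁ t₂ hk1 hk12 hv1 hξ hs hs2 ht1 ht2
      (ne_of_lt hx) (hx.trans h12)
    exact hd.continuousAt.continuousWithinAt
  · intro x hx
    rw [interior_Iio] at hx
    obtain ⟨d, hd, hneg⟩ := aux_G_deriv κ₁ κ₂ s ξ t₁ t₂ hk1 hk12 hv1 hξ hs hs2 ht1 ht2
      (ne_of_lt hx) (hx.trans h12)
    rw [hd.deriv]; exact hneg

lemma aux_G_anti₂ : StrictAntiOn (Gfun κ₁ κ₂ s ξ) (Set.Ioo t₁ t₂) := by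
  apply strictAntiOn_of_deriv_neg (convex_Ioo t₁ t₂)
  · intro x hx
    obtain ⟨d, hd, _⟩ := aux_G_deriv κ₁ κ₂ s ξ t₁ t₂ hk1 hk12 hv1 hξ hs hs2 ht1 ht2
      (ne_of_gt hx.1) hx.2
    exact hd.continuousAt.continuousWithinAt
  · intro x hx
    rw [interior_Ioo] at hx
    obtain ⟨d, hd, hneg⟩ := aux_G_deriv κ₁ κ₂ s ξ t₁ t₂ hk1 hk12 hv1 hξ hs hs2 ht1 ht2
      (ne_of_gt hx.1) hx.2
    rw [hd.deriv]; exact hneg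

-- limit of G as θ → t₁ (from either side); g₂ is the value of the second arctan at t₁
lemma aux_G_tendsto :
    Tendsto (Gfun κ₁ κ₂ s ξ) (𝓝[<] t₁)
      (𝓝 ((1/2)*(1 + κ₂/κ₁) + (1/Real.pi)*(Real.pi/2)
        - (κ₂/(κ₁*Real.pi)) * Real.arctan ((κ₁*(ξ - κ₂^2) + κ₁*(ξ*s)*t₁) / (ξ*s + ξ*(1-κ₁^2)*t₁)))) ∧
    Tendsto (Gfun κ₁ κ₂ s ξ) (𝓝[>] t₁)
      (𝓝 ((1/2)*(1 + κ₂/κ₁) + (1/Real.pi)*(-(Real.pi/2))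
        - (κ₂/(κ₁*Real.pi)) * Real.arctan ((κ₁*(ξ - κ₂^2) + κ₁*(ξ*s)*t₁) / (ξ*s + ξ*(1-κ₁^2)*t₁)))) := by
  obtain ⟨h12, h2n⟩ := aux_t12 hk1 hk12 hv1 hξ hs hs2 ht1 ht2
  have h1n : t₁ < 0 := h12.trans h2n
  have hk2 : 0 < κ₂ := hk1.trans hk12
  have hξpos : 0 < ξ := by rw [hξ]; positivity
  have h1v : 0 < 1 - κ₂^2 := by linarith
  have h1u : 0 < 1 - κ₁^2 := by nlinarith
  have hξu : ξ - κ₁^2 < 0 := by rw [hξ]; nlinarith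
  have hn1t : κ₂*(ξ - κ₁^2) + κ₂*(ξ*s)*t₁ < 0 := by
    have : κ₂*(ξ*s)*t₁ < 0 := mul_neg_of_pos_of_neg (by positivity) h1n
    nlinarith
  have hd1fact : ∀ θ : ℝ, ξ*s + ξ*(1-κ₂^2)*θ = (ξ*(1-κ₂^2))*(θ - t₁) := by
    intro θ; rw [ht1]; field_simp; ring
  have hd2t : ξ*s + ξ*(1-κ₁^2)*t₁ = (ξ*(1-κ₁^2))*(t₁ - t₂) := by
    rw [ht2]; field_simp; ring
  have hd2ne : ξ*s + ξ*(1-κ₁^2)*t₁ ≠ 0 := by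
    rw [hd2t]; exact ne_of_lt (mul_neg_of_pos_of_neg (by positivity) (by linarith))
  -- second arctan term is continuous at t₁
  have harc2 : ContinuousAt (fun θ : ℝ =>
      Real.arctan ((κ₁*(ξ - κ₂^2) + κ₁*(ξ*s)*θ) / (ξ*s + ξ*(1-κ₁^2)*θ))) t₁ := by
    apply Real.continuous_arctan.continuousAt.comp
    exact ContinuousAt.div (by fun_prop) (by fun_prop) hd2ne
  -- numerator of first arctan tends to a negative limit
  have hn1cont : Tendsto (fun θ : ℝ => -(κ₂*(ξ - κ₁^2) + κ₂*(ξ*s)*θ)) (𝓝 t₁)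
      (𝓝 (-(κ₂*(ξ - κ₁^2) + κ₂*(ξ*s)*t₁))) := by
    have hco : Continuous (fun θ : ℝ => -(κ₂*(ξ - κ₁^2) + κ₂*(ξ*s)*θ)) := by continuity
    exact hco.tendsto t₁
  have hd1cont : Tendsto (fun θ : ℝ => ξ*s + ξ*(1-κ₂^2)*θ) (𝓝 t₁) (𝓝 0) := by
    have : Tendsto (fun θ : ℝ => ξ*s + ξ*(1-κ₂^2)*θ) (𝓝 t₁) (𝓝 (ξ*s + ξ*(1-κ₂^2)*t₁)) := by
      have hco : Continuous (fun θ : ℝ => ξ*s + ξ*(1-κ₂^2)*θ) := by continuity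
      exact hco.tendsto t₁
    simpa [hd1fact t₁] using this
  constructor
  · -- left limit
    have hdenneg : Tendsto (fun θ : ℝ => -(ξ*s + ξ*(1-κ₂^2)*θ)) (𝓝[<] t₁) (𝓝[>] 0) := by
      rw [tendsto_nhdsWithin_iff]
      constructor
      · simpa using (hd1cont.neg).mono_left nhdsWithin_le_nhds
      · apply eventually_nhdsWithin_of_forall
        intro x hx
        rw [Set.mem_Iio] at hx
        have h0 : ξ*s + ξ*(1-κ₂^2)*x < 0 := by
          rw [hd1fact x]; exact mul_neg_of_pos_of_neg (by positivity) (by linarith)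
        exact Set.mem_Ioi.mpr (by linarith)
    have hinv : Tendsto (fun θ : ℝ => (-(ξ*s + ξ*(1-κ₂^2)*θ))⁻¹) (𝓝[<] t₁) atTop :=
      tendsto_inv_nhdsGT_zero.comp hdenneg
    have hprod : Tendsto (fun θ : ℝ =>
        (-(κ₂*(ξ - κ₁^2) + κ₂*(ξ*s)*θ)) * (-(ξ*s + ξ*(1-κ₂^2)*θ))⁻¹) (𝓝[<] t₁) atTop := by
      apply Filter.Tendsto.pos_mul_atTop (by linarith : (0:ℝ) < -(κ₂*(ξ - κ₁^2) + κ₂*(ξ*s)*t₁))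
        (hn1cont.mono_left nhdsWithin_le_nhds) hinv
    have hratio : Tendsto (fun θ : ℝ =>
        (κ₂*(ξ - κ₁^2) + κ₂*(ξ*s)*θ) / (ξ*s + ξ*(1-κ₂^2)*θ)) (𝓝[<] t₁) atTop := by
      refine hprod.congr (fun θ => ?_)
      rw [div_eq_mul_inv, inv_neg]; ring
    have harc1 : Tendsto (fun θ : ℝ =>
        Real.arctan ((κ₂*(ξ - κ₁^2) + κ₂*(ξ*s)*θ) / (ξ*s + ξ*(1-κ₂^2)*θ))) (𝓝[<] t₁)
        (𝓝 (Real.pi/2)) :=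
      (Real.tendsto_arctan_atTop.mono_right nhdsWithin_le_nhds).comp hratio
    exact ((tendsto_const_nhds.add (harc1.const_mul (1/Real.pi))).sub
      (((harc2.tendsto.mono_left nhdsWithin_le_nhds)).const_mul (κ₂/(κ₁*Real.pi))))
  · -- right limit
    have hdenpos : Tendsto (fun θ : ℝ => ξ*s + ξ*(1-κ₂^2)*θ) (𝓝[>] t₁) (𝓝[>] 0) := by
      rw [tendsto_nhdsWithin_iff]
      constructor
      · exact hd1cont.mono_left nhdsWithin_le_nhds
      · apply eventually_nhdsWithin_of_forall
        intro x hx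
        rw [Set.mem_Ioi] at hx
        have h0 : 0 < ξ*s + ξ*(1-κ₂^2)*x := by
          rw [hd1fact x]; exact mul_pos (by positivity) (by linarith)
        exact Set.mem_Ioi.mpr h0
    have hinv : Tendsto (fun θ : ℝ => (ξ*s + ξ*(1-κ₂^2)*θ)⁻¹) (𝓝[>] t₁) atTop :=
      tendsto_inv_nhdsGT_zero.comp hdenpos
    have hprod : Tendsto (fun θ : ℝ =>
        (-(κ₂*(ξ - κ₁^2) + κ₂*(ξ*s)*θ)) * (ξ*s + ξ*(1-κ₂^2)*θ)⁻¹) (𝓝[>] t₁) atTop := by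
      apply Filter.Tendsto.pos_mul_atTop (by linarith : (0:ℝ) < -(κ₂*(ξ - κ₁^2) + κ₂*(ξ*s)*t₁))
        (hn1cont.mono_left nhdsWithin_le_nhds) hinv
    have hratio : Tendsto (fun θ : ℝ =>
        (κ₂*(ξ - κ₁^2) + κ₂*(ξ*s)*θ) / (ξ*s + ξ*(1-κ₂^2)*θ)) (𝓝[>] t₁) atBot := by
      have hneg := tendsto_neg_atTop_atBot.comp hprod
      refine hneg.congr (fun θ => ?_)
      show -(-(κ₂*(ξ - κ₁^2) + κ₂*(ξ*s)*θ) * (ξ*s + ξ*(1-κ₂^2)*θ)⁻¹) = _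
      rw [div_eq_mul_inv]; ring
    have harc1 : Tendsto (fun θ : ℝ =>
        Real.arctan ((κ₂*(ξ - κ₁^2) + κ₂*(ξ*s)*θ) / (ξ*s + ξ*(1-κ₂^2)*θ))) (𝓝[>] t₁)
        (𝓝 (-(Real.pi/2))) :=
      (Real.tendsto_arctan_atBot.mono_right nhdsWithin_le_nhds).comp hratio
    exact ((tendsto_const_nhds.add (harc1.const_mul (1/Real.pi))).sub
      (((harc2.tendsto.mono_left nhdsWithin_le_nhds)).const_mul (κ₂/(κ₁*Real.pi))))

lemma aux_G_bounds :
    (∀ x ∈ Set.Iio t₁, 1 < Gfun κ₁ κ₂ s ξ x ∧ Gfun κ₁ κ₂ s ξ x < 1 + (κ₂/κ₁)/2) ∧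
    (∀ x ∈ Set.Ioo t₁ t₂, Gfun κ₁ κ₂ s ξ x < (κ₂/κ₁)/2) := by
  obtain ⟨h12, h2n⟩ := aux_t12 hk1 hk12 hv1 hξ hs hs2 ht1 ht2
  obtain ⟨hLleft, hLright⟩ := aux_G_tendsto hk1 hk12 hv1 hξ hs hs2 ht1 ht2
  have hanti₁ := aux_G_anti₁ hk1 hk12 hv1 hξ hs hs2 ht1 ht2
  have hanti₂ := aux_G_anti₂ hk1 hk12 hv1 hξ hs hs2 ht1 ht2
  have h1n : t₁ < 0 := h12.trans h2n
  have hk2 : 0 < κ₂ := hk1.trans hk12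
  have hξpos : 0 < ξ := by rw [hξ]; positivity
  have h1v : 0 < 1 - κ₂^2 := by linarith
  have h1u : 0 < 1 - κ₁^2 := by nlinarith
  have hπ : (0:ℝ) < Real.pi := Real.pi_pos
  have hξv : ξ - κ₂^2 < 0 := by rw [hξ]; nlinarith
  have hξu : ξ - κ₁^2 < 0 := by rw [hξ]; nlinarith
  have hd2fact : ∀ θ : ℝ, ξ*s + ξ*(1-κ₁^2)*θ = (ξ*(1-κ₁^2))*(θ - t₂) := by
    intro θ; rw [ht2]; field_simp; ring
  -- the second arctan value at t₁
  set A := Real.arctan ((κ₁*(ξ - κ₂^2) + κ₁*(ξ*s)*t₁) / (ξ*s + ξ*(1-κ₁^2)*t₁)) with hAdef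
  have hApos : 0 < A := by
    rw [hAdef]
    have harct : ∀ y : ℝ, 0 < y → 0 < Real.arctan y := fun y hy => by
      simpa [Real.arctan_zero] using Real.arctan_strictMono hy
    apply harct
    apply div_pos_of_neg_of_neg
    · have : κ₁*(ξ*s)*t₁ < 0 := mul_neg_of_pos_of_neg (by positivity) h1n
      nlinarith
    · rw [hd2fact t₁]; exact mul_neg_of_pos_of_neg (by positivity) (by linarith)
  have hAub : A < Real.pi/2 := Real.arctan_lt_pi_div_two _
  have hRpos : 0 < κ₂/(κ₁*Real.pi) := by positivity
  have hRhalf : (κ₂/(κ₁*Real.pi)) * (Real.pi/2) = (κ₂/κ₁)/2 := by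
    field_simp
  have hpihalf : (1/Real.pi)*(Real.pi/2) = 1/2 := by field_simp
  constructor
  · intro x hx
    constructor
    · -- lower bound via left limit
      have hlb := aux_lb_left hanti₁ hLleft hx
      have hRA : (κ₂/(κ₁*Real.pi)) * A < (κ₂/(κ₁*Real.pi)) * (Real.pi/2) :=
        mul_lt_mul_of_pos_left hAub hRpos
      rw [hRhalf] at hRA
      calc (1:ℝ) = (1/2)*(1 + κ₂/κ₁) + 1/2 - (κ₂/κ₁)/2 := by ring
      _ < (1/2)*(1 + κ₂/κ₁) + (1/Real.pi)*(Real.pi/2) - (κ₂/(κ₁*Real.pi)) * A := by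
          rw [hpihalf]; linarith
      _ < Gfun κ₁ κ₂ s ξ x := hlb
    · -- pointwise upper bound
      have hxt2 : x < t₂ := hx.out.trans h12 |>.trans_le (le_refl t₂) |>.trans_le (le_refl t₂)
      have hxneg : x < 0 := lt_trans hx.out h1n
      have harc1ub : Real.arctan ((κ₂*(ξ - κ₁^2) + κ₂*(ξ*s)*x) / (ξ*s + ξ*(1-κ₂^2)*x))
          < Real.pi/2 := Real.arctan_lt_pi_div_two _
      have harc2pos : 0 < Real.arctan ((κ₁*(ξ - κ₂^2) + κ₁*(ξ*s)*x) / (ξ*s + ξ*(1-κ₁^2)*x)) := by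
        have harct : ∀ y : ℝ, 0 < y → 0 < Real.arctan y := fun y hy => by
          simpa [Real.arctan_zero] using Real.arctan_strictMono hy
        apply harct
        apply div_pos_of_neg_of_neg
        · have : κ₁*(ξ*s)*x < 0 := mul_neg_of_pos_of_neg (by positivity) hxneg
          nlinarith
        · rw [hd2fact x]
          exact mul_neg_of_pos_of_neg (by positivity) (by linarith [lt_trans hx.out h12])
      unfold Gfun
      have h1 : (1/Real.pi) * Real.arctan ((κ₂*(ξ - κ₁^2) + κ₂*(ξ*s)*x) / (ξ*s + ξ*(1-κ₂^2)*x))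
          < (1/Real.pi) * (Real.pi/2) := mul_lt_mul_of_pos_left harc1ub (by positivity)
      rw [hpihalf] at h1
      have h2 : 0 < (κ₂/(κ₁*Real.pi)) *
          Real.arctan ((κ₁*(ξ - κ₂^2) + κ₁*(ξ*s)*x) / (ξ*s + ξ*(1-κ₁^2)*x)) :=
        mul_pos hRpos harc2pos
      have : (1:ℝ) + (κ₂/κ₁)/2 = (1/2)*(1 + κ₂/κ₁) + 1/2 := by ring
      linarith
  · intro x hx
    have hub := aux_ub_right hanti₂ hLright hx
    have hRA : 0 < (κ₂/(κ₁*Real.pi)) * A := mul_pos hRpos hApos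
    have : (1/2)*(1 + κ₂/κ₁) + (1/Real.pi)*(-(Real.pi/2)) - (κ₂/(κ₁*Real.pi)) * A
        < (κ₂/κ₁)/2 := by
      have hneg : (1/Real.pi)*(-(Real.pi/2)) = -(1/2) := by field_simp
      rw [hneg]; linarith
    linarith
end main


/-- Lemma 3.1, reduced form: For `c ∈ (0,√2)`, `p ∈ (0,1)` with
`p > p₀`, and `k ∈ ℕ`, `k ≥ 1`, with `κ₂/κ₁ < k`, the set of `θ < θ₂`, `θ ≠ θ₁`, with
`L(c,p,θ)` a positive integer is finite with at most `2(⌈k/2⌉ − 1)` elements. -/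
theorem stmt15 (c p : ℝ) (hc : c ∈ Set.Ioo 0 (Real.sqrt 2)) (hp : p ∈ Set.Ioo 0 1)
    (hpp : p > p0 c) (k : ℕ) (hk : 1 ≤ k)
    (hκ : kappa2 c p / kappa1 c p < (k : ℝ)) :
    letI S : Set ℝ := {θ : ℝ | θ < theta2 c p ∧ θ ≠ theta1 c p ∧
      ∃ m : ℕ, 0 < m ∧ Lfun c p θ = (m : ℝ)}
    S.Finite ∧ (S.ncard : ℤ) ≤ 2 * (⌈(k : ℚ) / 2⌉ - 1) := by
  obtain ⟨hc0, hcs⟩ := hc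
  obtain ⟨hp0', hp1⟩ := hp
  -- basic facts
  have hc2lt : c ^ 2 < 2 := by
    have h2 : (Real.sqrt 2) ^ 2 = 2 := Real.sq_sqrt (by norm_num)
    nlinarith [Real.sqrt_nonneg 2]
  have hc2pos : 0 < c ^ 2 := by positivity
  have hξpos : 0 < xiPar c p := by unfold xiPar; positivity
  have hξval : c ^ 4 - 4 * xiPar c p = (c ^ 2) ^ 2 * (1 - p) := by unfold xiPar; ring
  have hq0 : 0 ≤ c ^ 4 - 4 * xiPar c p := by
    rw [hξval]; exact mul_nonneg (by positivity) (by linarith)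
  have hq2 : (Real.sqrt (c ^ 4 - 4 * xiPar c p)) ^ 2 = c ^ 4 - 4 * xiPar c p :=
    Real.sq_sqrt hq0
  have hqpos : 0 < Real.sqrt (c ^ 4 - 4 * xiPar c p) := by
    apply Real.sqrt_pos.mpr; rw [hξval]; exact mul_pos (by positivity) (by linarith)
  set q := Real.sqrt (c ^ 4 - 4 * xiPar c p) with hqdef
  have hqlt : q < c ^ 2 := by nlinarith [hq2, hξpos, hqpos]
  have hk1sq : (kappa1 c p) ^ 2 = (c ^ 2 - q) / 2 := by
    unfold kappa1; rw [← hqdef]; exact Real.sq_sqrt (by linarith)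
  have hk2sq : (kappa2 c p) ^ 2 = (c ^ 2 + q) / 2 := by
    unfold kappa2; rw [← hqdef]; exact Real.sq_sqrt (by linarith)
  have hk1pos : 0 < kappa1 c p := by
    unfold kappa1; rw [← hqdef]; apply Real.sqrt_pos.mpr; linarith
  have hk2pos : 0 < kappa2 c p := by
    unfold kappa2; rw [← hqdef]; apply Real.sqrt_pos.mpr; linarith
  have hsum : (kappa1 c p) ^ 2 + (kappa2 c p) ^ 2 = c ^ 2 := by rw [hk1sq, hk2sq]; ring
  have hprod : xiPar c p = (kappa1 c p) ^ 2 * (kappa2 c p) ^ 2 := by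
    rw [hk1sq, hk2sq]; linear_combination ((1:ℝ)/4) * hq2
  have hk12 : kappa1 c p < kappa2 c p := by nlinarith [hk1sq, hk2sq]
  have hppξ : c ^ 2 - 1 < xiPar c p := by
    unfold p0 at hpp
    rw [gt_iff_lt, div_lt_iff₀ (by positivity : (0:ℝ) < c ^ 4)] at hpp
    unfold xiPar; nlinarith
  have hu1 : (kappa1 c p) ^ 2 < 1 := by rw [hk1sq]; linarith
  have hv1 : (kappa2 c p) ^ 2 < 1 := by
    have hfac : (1 - (kappa1 c p) ^ 2) * (1 - (kappa2 c p) ^ 2) = 1 - c ^ 2 + xiPar c p := by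
      linear_combination -hprod - hsum
    nlinarith [hfac, hppξ, hu1]
  set s := Real.sqrt (2 - c ^ 2) with hsdef
  have hs2 : s ^ 2 = 2 - ((kappa1 c p) ^ 2 + (kappa2 c p) ^ 2) := by
    rw [hsum]; exact Real.sq_sqrt (by linarith)
  have hspos : 0 < s := Real.sqrt_pos.mpr (by linarith)
  have hcq : c ^ 2 * Real.sqrt (1 - p) = q := by
    rw [hqdef, hξval, Real.sqrt_mul (by positivity) (1 - p),
      Real.sqrt_sq (le_of_lt hc2pos)]
  have h1v : 0 < 1 - (kappa2 c p) ^ 2 := by linarith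
  have h1u : 0 < 1 - (kappa1 c p) ^ 2 := by linarith
  have ht1 : theta1 c p = -s / (1 - (kappa2 c p) ^ 2) := by
    unfold theta1
    have hden : 2 - c ^ 2 - c ^ 2 * Real.sqrt (1 - p) = 2 * (1 - (kappa2 c p) ^ 2) := by
      rw [hcq, hk2sq]; ring
    rw [← hsdef, hden]
    field_simp
  have ht2 : theta2 c p = -s / (1 - (kappa1 c p) ^ 2) := by
    unfold theta2
    have hden : 2 - c ^ 2 + c ^ 2 * Real.sqrt (1 - p) = 2 * (1 - (kappa1 c p) ^ 2) := by
      rw [hcq, hk1sq]; ring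
    rw [← hsdef, hden]
    field_simp
  -- bridge Lfun = Gfun
  have hL : Lfun c p = Gfun (kappa1 c p) (kappa2 c p) s (xiPar c p) := by
    have hn1 : ∀ θ : ℝ, kappa2 c p * (-(kappa1 c p) ^ 2 + xiPar c p + xiPar c p * θ * s)
        = kappa2 c p * (xiPar c p - (kappa1 c p) ^ 2) + kappa2 c p * (xiPar c p * s) * θ :=
      fun θ => by ring
    have hd1 : ∀ θ : ℝ, xiPar c p * (θ * (kappa1 c p) ^ 2 + s + θ * (1 - c ^ 2))
        = xiPar c p * s + xiPar c p * (1 - (kappa2 c p) ^ 2) * θ :=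
      fun θ => by linear_combination (xiPar c p * θ) * hsum
    have hn2 : ∀ θ : ℝ, kappa1 c p * (-(kappa2 c p) ^ 2 + xiPar c p + xiPar c p * θ * s)
        = kappa1 c p * (xiPar c p - (kappa2 c p) ^ 2) + kappa1 c p * (xiPar c p * s) * θ :=
      fun θ => by ring
    have hd2 : ∀ θ : ℝ, xiPar c p * (θ * (kappa2 c p) ^ 2 + s + θ * (1 - c ^ 2))
        = xiPar c p * s + xiPar c p * (1 - (kappa1 c p) ^ 2) * θ :=
      fun θ => by linear_combination (xiPar c p * θ) * hsum
    funext θ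
    unfold Lfun Gfun
    rw [← hsdef, hn1 θ, hd1 θ, hn2 θ, hd2 θ]
  -- monotonicity and bounds from the abstract lemmas
  obtain ⟨h12, h2n⟩ := aux_t12 hk1pos hk12 hv1 hprod hspos hs2 ht1 ht2
  have hanti₁ : StrictAntiOn (Lfun c p) (Set.Iio (theta1 c p)) := by
    rw [hL]; exact aux_G_anti₁ hk1pos hk12 hv1 hprod hspos hs2 ht1 ht2
  have hanti₂ : StrictAntiOn (Lfun c p) (Set.Ioo (theta1 c p) (theta2 c p)) := by
    rw [hL]; exact aux_G_anti₂ hk1pos hk12 hv1 hprod hspos hs2 ht1 ht2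
  obtain ⟨hbd₁, hbd₂⟩ := aux_G_bounds hk1pos hk12 hv1 hprod hspos hs2 ht1 ht2
  have hbd₁' : ∀ x ∈ Set.Iio (theta1 c p), 1 < Lfun c p x ∧
      Lfun c p x < 1 + (kappa2 c p / kappa1 c p)/2 := by rw [hL]; exact hbd₁
  have hbd₂' : ∀ x ∈ Set.Ioo (theta1 c p) (theta2 c p),
      Lfun c p x < (kappa2 c p / kappa1 c p)/2 := by rw [hL]; exact hbd₂
  -- counting
  have main : ∀ S : Set ℝ, S = {θ : ℝ | θ < theta2 c p ∧ θ ≠ theta1 c p ∧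
      ∃ m : ℕ, 0 < m ∧ Lfun c p θ = (m : ℝ)} →
      S.Finite ∧ (S.ncard : ℤ) ≤ 2 * (⌈(k : ℚ) / 2⌉ - 1) := by
    intro S hS
    set M : ℕ := (k - 1) / 2 with hM
    set S₁ : Set ℝ := S ∩ Set.Iio (theta1 c p) with hS₁
    set S₂ : Set ℝ := S ∩ Set.Ioo (theta1 c p) (theta2 c p) with hS₂
    have hunion : S = S₁ ∪ S₂ := by
      apply Set.Subset.antisymm
      · intro θ hθ
        have hθ' := hθ
        rw [hS] at hθ'
        obtain ⟨hlt, hne, _⟩ := hθ'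
        rcases lt_or_gt_of_ne hne with h | h
        · exact Or.inl ⟨hθ, h⟩
        · exact Or.inr ⟨hθ, h, hlt⟩
      · exact Set.union_subset Set.inter_subset_left Set.inter_subset_left
    have hinj₁ : Set.InjOn (Lfun c p) S₁ := hanti₁.injOn.mono Set.inter_subset_right
    have hinj₂ : Set.InjOn (Lfun c p) S₂ := hanti₂.injOn.mono Set.inter_subset_right
    have hb₁ : ∀ x ∈ S₁, ∃ m : ℕ, Lfun c p x = m ∧ 2 ≤ m ∧ m ≤ (k+1)/2 := by
      rintro x ⟨hxS, hxlt⟩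
      rw [hS] at hxS
      obtain ⟨-, -, m, hm0, hmeq⟩ := hxS
      obtain ⟨hlow, hhigh⟩ := hbd₁' x hxlt
      rw [hmeq] at hlow hhigh
      refine ⟨m, hmeq, ?_, ?_⟩
      · have : (1:ℝ) < m := hlow
        have h1 : 1 < m := by exact_mod_cast this
        omega
      · have hrk : (kappa2 c p / kappa1 c p) < (k:ℝ) := hκ
        have : (m:ℝ) < 1 + (k:ℝ)/2 := by linarith
        have h2 : (2*m : ℝ) < k + 2 := by push_cast; linarith
        have h3 : 2*m < k + 2 := by exact_mod_cast h2
        omega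
    have hb₂ : ∀ x ∈ S₂, ∃ m : ℕ, Lfun c p x = m ∧ 1 ≤ m ∧ m ≤ M := by
      rintro x ⟨hxS, hxmem⟩
      rw [hS] at hxS
      obtain ⟨-, -, m, hm0, hmeq⟩ := hxS
      have hhigh := hbd₂' x hxmem
      rw [hmeq] at hhigh
      refine ⟨m, hmeq, hm0, ?_⟩
      have hrk : (kappa2 c p / kappa1 c p) < (k:ℝ) := hκ
      have : (m:ℝ) < (k:ℝ)/2 := by linarith
      have h2 : (2*m : ℝ) < k := by push_cast; linarith
      have h3 : 2*m < k := by exact_mod_cast h2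
      omega
    obtain ⟨hfin₁, hcard₁⟩ := aux_count hinj₁ 2 ((k+1)/2) hb₁
    obtain ⟨hfin₂, hcard₂⟩ := aux_count hinj₂ 1 M hb₂
    have hfin : S.Finite := by rw [hunion]; exact hfin₁.union hfin₂
    refine ⟨hfin, ?_⟩
    have hcardle : S.ncard ≤ 2 * M := by
      have h1 : S.ncard ≤ S₁.ncard + S₂.ncard := by
        rw [hunion]; exact Set.ncard_union_le S₁ S₂
      have h2 : (k+1)/2 + 1 - 2 ≤ M := by omega
      have h3 : M + 1 - 1 = M := by omega
      omega
    have h2M : 2 * M < k := by omega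
    have hceil : (M : ℤ) < ⌈(k : ℚ)/2⌉ := by
      apply Int.lt_ceil.mpr
      have : ((2*M : ℕ) : ℚ) < (k : ℚ) := by exact_mod_cast h2M
      push_cast at this ⊢
      linarith
    have : (S.ncard : ℤ) ≤ 2 * M := by exact_mod_cast hcardle
    omega
  exact main _ rfl
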